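/- For every real number y, the basic solution F(ρ,η) = √(ρ² + (η−y)²)/√ρ is an eigenfunction of the hyperbolic Laplacian with eigenvalue 3/4: at every point (ρ,η) of the upper half-plane H, ρ²(∂²F/∂ρ² + ∂²F/∂η²)(ρ,η) = (3/4)·F(ρ,η). -/

import Mathlib

/-- Partial derivative in the first variable (ρ). -/
noncomputable def pdr (f : ℝ → ℝ → ℝ) (ρ η : ℝ) : ℝ := deriv (fun r => f r η) ρ

/-- Partial derivative in the second variable (η). -/
noncomputable def pde (f : ℝ → ℝ → ℝ) (ρ η : ℝ) : ℝ := deriv (fun e => f ρ e) η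

/-- The basic eigenfunction F(ρ,η;y) = √(ρ² + (η−y)²)/√ρ. -/
noncomputable def Fbasic (y : ℝ) (ρ η : ℝ) : ℝ :=
  Real.sqrt (ρ ^ 2 + (η - y) ^ 2) / Real.sqrt ρ

lemma s_pos {x : ℝ} (c : ℝ) (hx : 0 < x) : 0 < x ^ 2 + c ^ 2 := by positivity

lemma hasDerivAt_b (c : ℝ) {x : ℝ} (hx : 0 < x) :
    HasDerivAt (fun r => Real.sqrt (r ^ 2 + c ^ 2)) (x / Real.sqrt (x ^ 2 + c ^ 2)) x := by
  have h1 : HasDerivAt (fun r : ℝ => r ^ 2 + c ^ 2) (2 * x) x := by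
    simpa using (hasDerivAt_pow 2 x).add_const (c ^ 2)
  have h2 := (Real.hasDerivAt_sqrt (s_pos c hx).ne').comp x h1
  refine h2.congr_deriv ?_
  have : Real.sqrt (x ^ 2 + c ^ 2) ≠ 0 := by positivity
  field_simp

-- closed form for ∂F/∂ρ
noncomputable def P1 (c x : ℝ) : ℝ :=
  (x / Real.sqrt (x ^ 2 + c ^ 2) * Real.sqrt x -
    Real.sqrt (x ^ 2 + c ^ 2) * (1 / (2 * Real.sqrt x))) / (Real.sqrt x) ^ 2

lemma hasDerivAt_F1 (y η : ℝ) {x : ℝ} (hx : 0 < x) :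
    HasDerivAt (fun r => Fbasic y r η) (P1 (η - y) x) x := by
  have h := (hasDerivAt_b (η - y) hx).div (Real.hasDerivAt_sqrt hx.ne')
    (by positivity : Real.sqrt x ≠ 0)
  simpa [Fbasic, P1, Pi.div_def] using h

lemma pdr_eq (y η : ℝ) {x : ℝ} (hx : 0 < x) :
    pdr (Fbasic y) x η = P1 (η - y) x := (hasDerivAt_F1 y η hx).deriv

lemma hasDerivAt_be (y ρ : ℝ) (e : ℝ) (hρ : 0 < ρ) :
    HasDerivAt (fun e => Real.sqrt (ρ ^ 2 + (e - y) ^ 2))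
      ((e - y) / Real.sqrt (ρ ^ 2 + (e - y) ^ 2)) e := by
  have h1 : HasDerivAt (fun e : ℝ => ρ ^ 2 + (e - y) ^ 2) (2 * (e - y)) e := by
    simpa using ((((hasDerivAt_id e).sub_const y).pow 2).const_add (ρ ^ 2))
  have h2 := (Real.hasDerivAt_sqrt (by positivity : ρ ^ 2 + (e - y) ^ 2 ≠ 0)).comp e h1
  refine h2.congr_deriv ?_
  have : Real.sqrt (ρ ^ 2 + (e - y) ^ 2) ≠ 0 := by positivity
  field_simp

lemma pde_eq (y ρ : ℝ) (e : ℝ) (hρ : 0 < ρ) :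
    pde (Fbasic y) ρ e
      = (e - y) / Real.sqrt (ρ ^ 2 + (e - y) ^ 2) / Real.sqrt ρ := by
  have h := (hasDerivAt_be y ρ e hρ).div_const (Real.sqrt ρ)
  exact h.deriv


/-- The basic solution is an eigenfunction of the hyperbolic Laplacian with
eigenvalue 3/4 on the upper half-plane. -/
theorem basic_solution_eigenfunction (y : ℝ) :
    ∀ ρ η : ℝ, 0 < ρ →
      ρ ^ 2 * (pdr (pdr (Fbasic y)) ρ η + pde (pde (Fbasic y)) ρ η)
        = (3 / 4) * Fbasic y ρ η := by
  intro ρ η hρ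
  set c := η - y with hc
  have hbne : Real.sqrt (ρ ^ 2 + c ^ 2) ≠ 0 := by positivity
  have hane : Real.sqrt ρ ≠ 0 := by positivity
  have ha := Real.hasDerivAt_sqrt hρ.ne'
  have hb := hasDerivAt_b c hρ
  -- second derivative in ρ
  have t1 := (hasDerivAt_id' ρ).div hb hbne
  have t2 := t1.mul ha
  have t3 := (hasDerivAt_const ρ (1:ℝ)).div (ha.const_mul 2)
    (by positivity : 2 * Real.sqrt ρ ≠ 0)
  have t4 := hb.mul t3
  have t5 := (t2.sub t4).div (ha.pow 2) (by positivity : Real.sqrt ρ ^ 2 ≠ 0)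
  have hdrr : pdr (pdr (Fbasic y)) ρ η = deriv (fun r => P1 c r) ρ := by
    apply Filter.EventuallyEq.deriv_eq
    filter_upwards [eventually_gt_nhds hρ] with r hr
    exact pdr_eq y η hr
  rw [hdrr]
  unfold P1
  have t5' : HasDerivAt (fun r => (r / Real.sqrt (r ^ 2 + c ^ 2) * Real.sqrt r -
      Real.sqrt (r ^ 2 + c ^ 2) * (1 / (2 * Real.sqrt r))) / Real.sqrt r ^ 2) _ ρ := t5
  rw [t5'.deriv]
  -- second derivative in η
  have u1 := (((hasDerivAt_id' η).sub_const y).div (hasDerivAt_be y ρ η hρ)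
    hbne).div_const (Real.sqrt ρ)
  have hdee : pde (pde (Fbasic y)) ρ η = deriv
      (fun e => (e - y) / Real.sqrt (ρ ^ 2 + (e - y) ^ 2) / Real.sqrt ρ) η := by
    unfold pde
    congr 1
    funext e
    exact pde_eq y ρ e hρ
  have u1' : HasDerivAt (fun e => (e - y) / Real.sqrt (ρ ^ 2 + (e - y) ^ 2) / Real.sqrt ρ) _ η := u1
  rw [hdee, u1'.deriv]
  simp only [Pi.div_apply, Pi.mul_apply, Pi.sub_apply, Pi.pow_apply]
  unfold Fbasic
  rw [← hc]
  have ha2 : Real.sqrt ρ ^ 2 = ρ := Real.sq_sqrt hρ.le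
  have hb2 : Real.sqrt (ρ ^ 2 + c ^ 2) ^ 2 = ρ ^ 2 + c ^ 2 :=
    Real.sq_sqrt (by positivity)
  have hapos : 0 < Real.sqrt ρ := Real.sqrt_pos.2 hρ
  have hbpos : 0 < Real.sqrt (ρ ^ 2 + c ^ 2) := Real.sqrt_pos.2 (by positivity)
  set A := Real.sqrt ρ with hA
  set B := Real.sqrt (ρ ^ 2 + c ^ 2) with hB
  clear_value A B
  rw [← ha2] at hb2 ⊢
  field_simp
  linear_combination (16 * A ^ 5) * hb2
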